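/- For each t ∈ [0,1), the operator C_t is a bicontinuous linear isomorphism of ω onto itself, whose inverse is given by (C_t)^{-1} y = ((n+1) y_n − n t y_{n−1})_{n∈ℕ₀}, with the convention y_{−1} := 0. -/

import Mathlib

/-- The generalized Cesàro operator `C_t` acting on complex sequences:
`(C_t x)_n = (1/(n+1)) ∑_{i=0}^n t^{n-i} x_i`. -/
noncomputable def genCesaro (t : ℝ) (x : ℕ → ℂ) : ℕ → ℂ :=
  fun n => (1 / ((n : ℂ) + 1)) * ∑ i ∈ Finset.range (n + 1), (t : ℂ) ^ (n - i) * x i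

/-- The candidate inverse. -/
noncomputable def genCesaroInv (t : ℝ) (y : ℕ → ℂ) : ℕ → ℂ :=
  fun n => ((n : ℂ) + 1) * y n - (n : ℂ) * (t : ℂ) * y (n - 1)

lemma genCesaro_left_inv (t : ℝ) (x : ℕ → ℂ) :
    genCesaroInv t (genCesaro t x) = x := by
  funext n
  cases n with
  | zero => simp [genCesaro, genCesaroInv]
  | succ m =>
    have hS : ∑ i ∈ Finset.range (m + 1 + 1), (t : ℂ) ^ (m + 1 - i) * x i
        = (t : ℂ) * ∑ i ∈ Finset.range (m + 1), (t : ℂ) ^ (m - i) * x i + x (m + 1) := by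
      rw [Finset.sum_range_succ, Finset.mul_sum]
      congr 1
      · apply Finset.sum_congr rfl
        intro i hi
        have hi' : i ≤ m := Nat.lt_succ_iff.mp (Finset.mem_range.mp hi)
        have e2 : m + 1 - i = (m - i) + 1 := by omega
        rw [e2, pow_succ]
        ring
      · simp
    have h1 : ((m : ℂ) + 1) ≠ 0 := by exact_mod_cast Nat.succ_ne_zero m
    have h2 : ((m : ℂ) + 1) + 1 ≠ 0 := by
      have : (((m + 1 : ℕ)) : ℂ) + 1 ≠ 0 := by exact_mod_cast Nat.succ_ne_zero (m + 1)
      push_cast at this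
      exact this
    simp only [genCesaro, genCesaroInv, Nat.add_sub_cancel]
    push_cast
    rw [hS]
    field_simp
    ring

lemma genCesaro_right_inv (t : ℝ) (y : ℕ → ℂ) :
    genCesaro t (genCesaroInv t y) = y := by
  funext n
  simp only [genCesaro, genCesaroInv]
  have key : ∑ i ∈ Finset.range (n + 1),
      (t : ℂ) ^ (n - i) * ((((i : ℂ)) + 1) * y i - (i : ℂ) * (t : ℂ) * y (i - 1))
      = ((n : ℂ) + 1) * y n := by
    have htel := Finset.sum_range_sub
      (fun j : ℕ => ((j : ℂ)) * (t : ℂ) ^ (n + 1 - j) * y (j - 1)) (n + 1)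
    calc ∑ i ∈ Finset.range (n + 1),
          (t : ℂ) ^ (n - i) * ((((i : ℂ)) + 1) * y i - (i : ℂ) * (t : ℂ) * y (i - 1))
        = ∑ i ∈ Finset.range (n + 1),
            ((((i + 1 : ℕ)) : ℂ) * (t : ℂ) ^ (n + 1 - (i + 1)) * y ((i + 1) - 1)
              - ((i : ℂ)) * (t : ℂ) ^ (n + 1 - i) * y (i - 1)) := by
          apply Finset.sum_congr rfl
          intro i hi
          have hi' : i ≤ n := Nat.lt_succ_iff.mp (Finset.mem_range.mp hi)
          have e1 : n + 1 - (i + 1) = n - i := by omega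
          have e2 : n + 1 - i = (n - i) + 1 := by omega
          rw [e1, e2, pow_succ]
          push_cast
          ring
      _ = ((n : ℂ) + 1) * y n := by
          rw [htel]
          simp
  rw [key]
  have h1 : ((n : ℂ) + 1) ≠ 0 := by exact_mod_cast Nat.succ_ne_zero n
  field_simp

/-- For each `t ∈ [0,1)`, the operator `C_t` is a bicontinuous linear isomorphism of
`ω = ℂ^ℕ` (with the product topology) onto itself, whose inverse is given by
`(C_t)⁻¹ y = ((n+1) yₙ - n t y_{n-1})ₙ` (with `y₋₁ := 0`; note that for `n = 0` the
second term vanishes since its coefficient is `n = 0`). -/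
theorem genCesaro_continuousLinearEquiv (t : ℝ) (ht : t ∈ Set.Ico (0 : ℝ) 1) :
    ∃ e : (ℕ → ℂ) ≃L[ℂ] (ℕ → ℂ),
      (∀ x, e x = genCesaro t x) ∧
      (∀ (y : ℕ → ℂ) (n : ℕ),
        e.symm y n = ((n : ℂ) + 1) * y n - (n : ℂ) * (t : ℂ) * y (n - 1)) := by
  refine ⟨{ toFun := genCesaro t
            invFun := genCesaroInv t
            map_add' := ?_
            map_smul' := ?_
            left_inv := genCesaro_left_inv t
            right_inv := genCesaro_right_inv t
            continuous_toFun := ?_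
            continuous_invFun := ?_ }, fun x => rfl, fun y n => rfl⟩
  · intro x y
    funext n
    simp only [genCesaro, Pi.add_apply, mul_add, Finset.sum_add_distrib]
  · intro c x
    funext n
    simp only [genCesaro, Pi.smul_apply, smul_eq_mul, RingHom.id_apply, Finset.mul_sum]
    apply Finset.sum_congr rfl
    intro i _
    ring
  · exact continuous_pi fun n => continuous_const.mul
      (continuous_finset_sum _ fun i _ => continuous_const.mul (continuous_apply i))
  · exact continuous_pi fun n =>
      (continuous_const.mul (continuous_apply n)).sub
        (continuous_const.mul (continuous_apply (n - 1)))
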